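/- arXiv:2205.13407 — 6 statements merged into one kernel-verified Lean document; each statement's English description precedes it below -/
import Mathlib

section
/- Let m, n, k, P be real numbers with m ≥ n ≥ k ≥ 1 and 1 ≤ P ≤ m/n. Consider the feasible set S of points x = (x1, x2, x3) ∈ ℝ³ satisfying (mnk/P)² ≤ x1·x2·x3, nk/P ≤ x1, mk/P ≤ x2, and mn/P ≤ x3. Then the minimum of x1 + x2 + x3 over S equals nk + mk/P + mn/P, and it is attained at x1 = nk, x2 = mk/P, x3 = mn/P. -/
/-- Case 1 of the key optimization problem (`P ≤ m/n`): the minimum of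
`x₁ + x₂ + x₃` over the feasible set defined by `(mnk/P)² ≤ x₁x₂x₃`,
`nk/P ≤ x₁`, `mk/P ≤ x₂`, `mn/P ≤ x₃` equals `nk + mk/P + mn/P`, attained at
`x₁ = nk`, `x₂ = mk/P`, `x₃ = mn/P`. -/
theorem stmt_4 (m n k P : ℝ) (hk : 1 ≤ k) (hnk : k ≤ n) (hmn : n ≤ m)
    (hP1 : 1 ≤ P) (hP : P ≤ m / n) :
    (∀ x1 x2 x3 : ℝ,
        (m * n * k / P) ^ 2 ≤ x1 * x2 * x3 →
        n * k / P ≤ x1 → m * k / P ≤ x2 → m * n / P ≤ x3 →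
        n * k + m * k / P + m * n / P ≤ x1 + x2 + x3) ∧
    ((m * n * k / P) ^ 2 ≤ (n * k) * (m * k / P) * (m * n / P) ∧
      n * k / P ≤ n * k ∧ m * k / P ≤ m * k / P ∧ m * n / P ≤ m * n / P) := by
  have hP0 : (0:ℝ) < P := lt_of_lt_of_le one_pos hP1
  have hk0 : (0:ℝ) < k := lt_of_lt_of_le one_pos hk
  have hn0 : (0:ℝ) < n := lt_of_lt_of_le hk0 hnk
  have hm0 : (0:ℝ) < m := lt_of_lt_of_le hn0 hmn
  have hPn : P * n ≤ m := by
    have := (le_div_iff₀ hn0).mp hP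
    linarith
  set a := n * k with ha_def
  set b := m * k / P with hb_def
  set c := m * n / P with hc_def
  have ha0 : 0 < a := mul_pos hn0 hk0
  have hab : a ≤ b := by
    rw [hb_def, le_div_iff₀ hP0]; nlinarith
  have hac : a ≤ c := by
    rw [hc_def, le_div_iff₀ hP0]; nlinarith
  have hprod_eq : (m * n * k / P) ^ 2 = a * b * c := by
    rw [ha_def, hb_def, hc_def]; field_simp
  constructor
  · intro x1 x2 x3 hx hx1 hx2 hx3
    have hb0 : 0 < b := lt_of_lt_of_le ha0 hab
    have hc0 : 0 < c := lt_of_lt_of_le ha0 hac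
    have hx2' : b ≤ x2 := hx2
    have hx3' : c ≤ x3 := hx3
    have hx20 : 0 < x2 := lt_of_lt_of_le hb0 hx2'
    have hx30 : 0 < x3 := lt_of_lt_of_le hc0 hx3'
    have hxabc : a * b * c ≤ x1 * x2 * x3 := hprod_eq ▸ hx
    have h1 : 0 ≤ x3 * (x2 - b) * (x2 - a) :=
      mul_nonneg (mul_nonneg hx30.le (by linarith)) (by linarith)
    have h2 : 0 ≤ (x3 - c) * (x2 * x3 - a * b) := by
      apply mul_nonneg (by linarith)
      nlinarith
    nlinarith [mul_pos hx20 hx30]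
  · refine ⟨le_of_eq hprod_eq, ?_, le_refl _, le_refl _⟩
    rw [ha_def, div_le_iff₀ hP0]; nlinarith
end

section
/- Let m, n, k, P be real numbers with m ≥ n ≥ k ≥ 1 and m/n ≤ P ≤ mn/k². Consider the feasible set S of points x = (x1, x2, x3) ∈ ℝ³ satisfying (mnk/P)² ≤ x1·x2·x3, nk/P ≤ x1, mk/P ≤ x2, and mn/P ≤ x3. Then the minimum of x1 + x2 + x3 over S equals 2·(mnk²/P)^{1/2} + mn/P, and it is attained at x1 = x2 = (mnk²/P)^{1/2}, x3 = mn/P. -/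
set_option maxHeartbeats 1000000 in
/-- Case 2 of the key optimization problem (`m/n ≤ P ≤ mn/k²`): the minimum of
`x₁ + x₂ + x₃` over the feasible set defined by `(mnk/P)² ≤ x₁x₂x₃`,
`nk/P ≤ x₁`, `mk/P ≤ x₂`, `mn/P ≤ x₃` equals `2(mnk²/P)^{1/2} + mn/P`,
attained at `x₁ = x₂ = (mnk²/P)^{1/2}`, `x₃ = mn/P`. -/
theorem stmt_5 (m n k P : ℝ) (hk : 1 ≤ k) (hnk : k ≤ n) (hmn : n ≤ m)
    (hP1 : m / n ≤ P) (hP2 : P ≤ m * n / k ^ 2) :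
    (∀ x1 x2 x3 : ℝ,
        (m * n * k / P) ^ 2 ≤ x1 * x2 * x3 →
        n * k / P ≤ x1 → m * k / P ≤ x2 → m * n / P ≤ x3 →
        2 * Real.sqrt (m * n * k ^ 2 / P) + m * n / P ≤ x1 + x2 + x3) ∧
    ((m * n * k / P) ^ 2 ≤
        Real.sqrt (m * n * k ^ 2 / P) * Real.sqrt (m * n * k ^ 2 / P) *
          (m * n / P) ∧
      n * k / P ≤ Real.sqrt (m * n * k ^ 2 / P) ∧
      m * k / P ≤ Real.sqrt (m * n * k ^ 2 / P) ∧
      m * n / P ≤ m * n / P) := by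
  have hk0 : (0:ℝ) < k := lt_of_lt_of_le one_pos hk
  have hn0 : (0:ℝ) < n := lt_of_lt_of_le hk0 hnk
  have hm0 : (0:ℝ) < m := lt_of_lt_of_le hn0 hmn
  have hP0 : (0:ℝ) < P := lt_of_lt_of_le (div_pos hm0 hn0) hP1
  have hmnP : m ≤ n * P := by
    have := (div_le_iff₀ hn0).mp hP1; linarith
  have h1P : 1 ≤ P := by
    have : n ≤ n * P := le_trans hmn hmnP
    nlinarith
  have hnmP : n ≤ m * P := by nlinarith
  have hkP : k ^ 2 * P ≤ m * n := by
    have := (le_div_iff₀ (by positivity)).mp hP2; linarith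
  -- s = √(mnk²/P) = √(mn/P) * k
  set sa := Real.sqrt (m * n / P) with hsadef
  have hsa0 : 0 < sa := Real.sqrt_pos.mpr (by positivity)
  have hsaq : sa ^ 2 = m * n / P := Real.sq_sqrt (by positivity)
  have hs : Real.sqrt (m * n * k ^ 2 / P) = sa * k := by
    rw [show m * n * k ^ 2 / P = (m * n / P) * k ^ 2 by ring,
      Real.sqrt_mul (by positivity), Real.sqrt_sq hk0.le]
  have hksa : k ≤ sa := by
    rw [hsadef]
    rw [show k = Real.sqrt (k ^ 2) from (Real.sqrt_sq hk0.le).symm]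
    apply Real.sqrt_le_sqrt
    rw [le_div_iff₀ hP0]; linarith
  constructor
  · intro x1 x2 x3 hprod hx1 hx2 hx3
    have hx10 : 0 < x1 := lt_of_lt_of_le (by positivity) hx1
    have hx20 : 0 < x2 := lt_of_lt_of_le (by positivity) hx2
    have hx30 : 0 < x3 := lt_of_lt_of_le (by positivity) hx3
    set u := Real.sqrt x1 with hudef
    set v := Real.sqrt x2 with hvdef
    set t := Real.sqrt x3 with htdef
    have hu : u ^ 2 = x1 := Real.sq_sqrt hx10.le
    have hv : v ^ 2 = x2 := Real.sq_sqrt hx20.le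
    have ht : t ^ 2 = x3 := Real.sq_sqrt hx30.le
    have hu0 : 0 < u := Real.sqrt_pos.mpr hx10
    have hv0 : 0 < v := Real.sqrt_pos.mpr hx20
    have ht0 : 0 < t := Real.sqrt_pos.mpr hx30
    have hsat : sa ≤ t := Real.sqrt_le_sqrt hx3
    have huvt : sa ^ 2 * k ≤ u * v * t := by
      have h1 : (sa ^ 2 * k) ^ 2 ≤ (u * v * t) ^ 2 := by
        calc (sa ^ 2 * k) ^ 2 = (m * n * k / P) ^ 2 := by rw [hsaq]; ring
          _ ≤ x1 * x2 * x3 := hprod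
          _ = (u * v * t) ^ 2 := by rw [mul_pow, mul_pow, hu, hv, ht]
      have h2 := Real.sqrt_le_sqrt h1
      rwa [Real.sqrt_sq (by positivity), Real.sqrt_sq (by positivity)] at h2
    have hfac : 0 ≤ (t - sa) * (t ^ 2 + sa * t - 2 * k * sa) := by
      apply mul_nonneg (by linarith)
      nlinarith [mul_le_mul_of_nonneg_right hsat ht0.le,
        mul_le_mul_of_nonneg_right hksa hsa0.le,
        mul_le_mul_of_nonneg_left hsat hsa0.le]
    rw [hs, ← hsaq, ← hu, ← hv, ← ht]
    have key : t * (u ^ 2 + v ^ 2 + t ^ 2 - (2 * (sa * k) + sa ^ 2)) =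
        t * (u - v) ^ 2 + 2 * (u * v * t - sa ^ 2 * k) +
          (t - sa) * (t ^ 2 + sa * t - 2 * k * sa) := by ring
    have h0 : 0 ≤ t * (u ^ 2 + v ^ 2 + t ^ 2 - (2 * (sa * k) + sa ^ 2)) := by
      rw [key]
      have := mul_nonneg ht0.le (sq_nonneg (u - v))
      linarith
    have h1 : 0 ≤ u ^ 2 + v ^ 2 + t ^ 2 - (2 * (sa * k) + sa ^ 2) :=
      nonneg_of_mul_nonneg_right h0 ht0
    linarith
  · refine ⟨?_, ?_, ?_, le_refl _⟩
    · rw [Real.mul_self_sqrt (by positivity)]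
      have hEq : (m * n * k / P) ^ 2 = m * n * k ^ 2 / P * (m * n / P) := by
        field_simp
      exact hEq.le
    · rw [hs, div_le_iff₀ hP0]
      have hsq : (n * k) ^ 2 ≤ (sa * k * P) ^ 2 := by
        rw [mul_pow, mul_pow, mul_pow, hsaq]
        have hEq : m * n / P * k ^ 2 * P ^ 2 = m * n * P * k ^ 2 := by
          field_simp
        rw [hEq]
        nlinarith [mul_le_mul_of_nonneg_left hnmP
          (show (0:ℝ) ≤ n * k ^ 2 by positivity)]
      nlinarith [hsq, mul_pos hn0 hk0, mul_pos (mul_pos hsa0 hk0) hP0]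
    · rw [hs, div_le_iff₀ hP0]
      have hsq : (m * k) ^ 2 ≤ (sa * k * P) ^ 2 := by
        rw [mul_pow, mul_pow, mul_pow, hsaq]
        have hEq : m * n / P * k ^ 2 * P ^ 2 = m * n * P * k ^ 2 := by
          field_simp
        rw [hEq]
        nlinarith [mul_le_mul_of_nonneg_left hmnP
          (show (0:ℝ) ≤ m * k ^ 2 by positivity)]
      nlinarith [hsq, mul_pos hm0 hk0, mul_pos (mul_pos hsa0 hk0) hP0]
end

section
/- Let n1, n2, n3 be positive integers, set m = max{n1, n2, n3}, n = median{n1, n2, n3}, k = min{n1, n2, n3}, and let P be a real number with 1 ≤ P ≤ m/n. If F is a finite set of triples (i1, i2, i3) with 1 ≤ i1 ≤ n1, 1 ≤ i2 ≤ n2, 1 ≤ i3 ≤ n3 and |F| ≥ n1·n2·n3 / P, then |φ_A(F)| + |φ_B(F)| + |φ_C(F)| ≥ nk + mk/P + mn/P. -/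
set_option maxHeartbeats 1000000 in
theorem key (m n k P A B C f : ℝ) (hm : 0 < m) (hn : 0 < n) (hk : 0 < k) (hnk : k ≤ n)
    (hP : 0 < P) (hP2 : P ≤ m / n) (hfB : f ≤ B * n) (hfC : f ≤ C * k)
    (hLW : f ^ 2 ≤ A * B * C) (hf : m * n * k / P ≤ f) :
    n * k + m * k / P + m * n / P ≤ A + B + C := by
  have hf0 : 0 < f := lt_of_lt_of_le (by positivity) hf
  have hB0 : 0 < B := by nlinarith
  have hC0 : 0 < C := by nlinarith
  have hPn : P * n ≤ m := (le_div_iff₀ hn).mp hP2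
  have hmnk : m * n * k ≤ f * P := by
    rw [div_le_iff₀ hP] at hf; linarith
  set u : ℝ := B * P / (m * k) with hu_def
  set v : ℝ := C * P / (m * n) with hv_def
  have hu : 1 ≤ u := by
    rw [hu_def, le_div_iff₀ (by positivity)]
    nlinarith
  have hv : 1 ≤ v := by
    rw [hv_def, le_div_iff₀ (by positivity)]
    nlinarith
  have hBu : B = u * (m * k) / P := by rw [hu_def]; field_simp
  have hCv : C = v * (m * n) / P := by rw [hv_def]; field_simp
  have hA : n * k ≤ A * (u * v) := by
    have h1 : (m * n * k / P) ^ 2 ≤ A * B * C := by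
      refine le_trans ?_ hLW
      exact pow_le_pow_left₀ (by positivity) hf 2
    rw [hBu, hCv] at h1
    have h2 : (m*n*k/P)^2 = (m*n*k)^2/P^2 := by ring
    have h3 : A * (u * (m * k) / P) * (v * (m * n) / P) = A * (u*v) * (m*m*n*k) / P^2 := by
      ring
    rw [h2, h3] at h1
    rw [div_le_div_iff₀ (by positivity) (by positivity)] at h1
    have h5 : (n*k)*(m*m*n*k*P^2) ≤ (A*(u*v))*(m*m*n*k*P^2) := by nlinarith [h1]
    exact le_of_mul_le_mul_right h5 (by positivity)
  clear_value u v
  clear hu_def hv_def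
  have hu0 : (0:ℝ) < u := lt_of_lt_of_le one_pos hu
  have hv0 : (0:ℝ) < v := lt_of_lt_of_le one_pos hv
  have huv1 : (1:ℝ) ≤ u * v := by nlinarith
  have hmkP : n * k ≤ m * k / P := by
    rw [le_div_iff₀ hP]; nlinarith
  have hmnP : n * k ≤ m * n / P := by
    rw [le_div_iff₀ hP]; nlinarith
  have hA0 : 0 < A := by nlinarith [mul_pos hn hk, mul_pos hu0 hv0]
  have huv : n * k / (u * v) ≤ A := by
    rw [div_le_iff₀ (by positivity)]; linarith
  have hfin : 1 + u^2*v + u*v^2 ≥ 3 * (u*v) := by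
    nlinarith [mul_nonneg hv0.le (sq_nonneg (u-1)),
      mul_nonneg (sub_nonneg.2 hv) (sub_nonneg.2 huv1)]
  rw [hBu, hCv]
  have hB' : n*k*(u-1) ≤ u * (m*k)/P - m*k/P := by
    have h : u * (m*k)/P - m*k/P = (u-1)*(m*k/P) := by ring
    rw [h]
    nlinarith [sub_nonneg.2 hu]
  have hC' : n*k*(v-1) ≤ v * (m*n)/P - m*n/P := by
    have h : v * (m*n)/P - m*n/P = (v-1)*(m*n/P) := by ring
    rw [h]
    nlinarith [sub_nonneg.2 hv]
  have hA' : n*k*(3 - u - v) ≤ A := by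
    refine le_trans ?_ huv
    rw [le_div_iff₀ (by positivity)]
    nlinarith [hfin, mul_pos hn hk]
  linarith


lemma fiber_bound3 (F : Finset (ℕ × ℕ × ℕ)) (d : ℕ)
    (h : ∀ t ∈ F, 1 ≤ t.2.2 ∧ t.2.2 ≤ d) :
    F.card ≤ (F.image fun t => (t.1, t.2.1)).card * d := by
  have hinj : ∀ a ∈ F, ∀ b ∈ F,
      (((a.1, a.2.1), a.2.2) : (ℕ×ℕ)×ℕ) = ((b.1, b.2.1), b.2.2) → a = b := by
    intro a _ b _ hab
    simp only [Prod.ext_iff] at hab ⊢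
    tauto
  have hmap : ∀ t ∈ F, (((t.1, t.2.1), t.2.2) : (ℕ×ℕ)×ℕ) ∈
      (F.image fun t => (t.1, t.2.1)) ×ˢ Finset.Icc 1 d := by
    intro t ht
    rw [Finset.mem_product]
    exact ⟨Finset.mem_image_of_mem _ ht, Finset.mem_Icc.2 (h t ht)⟩
  have := Finset.card_le_card_of_injOn _ hmap hinj
  simpa [Nat.card_Icc] using this

lemma fiber_bound1 (F : Finset (ℕ × ℕ × ℕ)) (d : ℕ)
    (h : ∀ t ∈ F, 1 ≤ t.1 ∧ t.1 ≤ d) :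
    F.card ≤ (F.image fun t => (t.2.1, t.2.2)).card * d := by
  have hinj : ∀ a ∈ F, ∀ b ∈ F,
      (((a.2.1, a.2.2), a.1) : (ℕ×ℕ)×ℕ) = ((b.2.1, b.2.2), b.1) → a = b := by
    intro a _ b _ hab
    simp only [Prod.ext_iff] at hab ⊢
    tauto
  have hmap : ∀ t ∈ F, (((t.2.1, t.2.2), t.1) : (ℕ×ℕ)×ℕ) ∈
      (F.image fun t => (t.2.1, t.2.2)) ×ˢ Finset.Icc 1 d := by
    intro t ht
    rw [Finset.mem_product]
    exact ⟨Finset.mem_image_of_mem _ ht, Finset.mem_Icc.2 (h t ht)⟩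
  have := Finset.card_le_card_of_injOn _ hmap hinj
  simpa [Nat.card_Icc] using this

lemma fiber_bound2 (F : Finset (ℕ × ℕ × ℕ)) (d : ℕ)
    (h : ∀ t ∈ F, 1 ≤ t.2.1 ∧ t.2.1 ≤ d) :
    F.card ≤ (F.image fun t => (t.1, t.2.2)).card * d := by
  have hinj : ∀ a ∈ F, ∀ b ∈ F,
      (((a.1, a.2.2), a.2.1) : (ℕ×ℕ)×ℕ) = ((b.1, b.2.2), b.2.1) → a = b := by
    intro a _ b _ hab
    simp only [Prod.ext_iff] at hab ⊢
    tauto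
  have hmap : ∀ t ∈ F, (((t.1, t.2.2), t.2.1) : (ℕ×ℕ)×ℕ) ∈
      (F.image fun t => (t.1, t.2.2)) ×ˢ Finset.Icc 1 d := by
    intro t ht
    rw [Finset.mem_product]
    exact ⟨Finset.mem_image_of_mem _ ht, Finset.mem_Icc.2 (h t ht)⟩
  have := Finset.card_le_card_of_injOn _ hmap hinj
  simpa [Nat.card_Icc] using this

/-- Discrete Loomis–Whitney inequality. -/
lemma loomis_whitney (F : Finset (ℕ × ℕ × ℕ)) :
    F.card ^ 2 ≤ (F.image fun t => (t.1, t.2.1)).card *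
      ((F.image fun t => (t.2.1, t.2.2)).card * (F.image fun t => (t.1, t.2.2)).card) := by
  classical
  set π12 := F.image fun t => (t.1, t.2.1) with hπ12
  set π23 := F.image fun t => (t.2.1, t.2.2) with hπ23
  set π13 := F.image fun t => (t.1, t.2.2) with hπ13
  set g : ℕ × ℕ → ℕ := fun p => (F.filter fun t => (t.1, t.2.1) = p).card with hg
  set g13 : ℕ → ℕ := fun a => (π13.filter fun q => q.1 = a).card with hg13
  set g23 : ℕ → ℕ := fun b => (π23.filter fun q => q.1 = b).card with hg23
  set A1 := F.image fun t => t.1 with hA1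
  set A2 := F.image fun t => t.2.1 with hA2
  have h0 : F.card = ∑ p ∈ π12, g p :=
    Finset.card_eq_sum_card_fiberwise (fun t ht => Finset.mem_image_of_mem _ ht)
  have hCS : (∑ p ∈ π12, g p) ^ 2 ≤ π12.card * ∑ p ∈ π12, g p ^ 2 := by
    have := sq_sum_le_card_mul_sum_sq (s := π12) (f := fun p => (g p : ℤ))
    exact_mod_cast this
  have hg13le : ∀ p ∈ π12, g p ≤ g13 p.1 := by
    intro p _
    refine Finset.card_le_card_of_injOn (fun t => (t.1, t.2.2)) ?_ ?_
    · intro t ht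
      rw [Finset.mem_coe, Finset.mem_filter] at ht ⊢
      exact ⟨Finset.mem_image_of_mem _ ht.1, by
        have := ht.2; simp only [Prod.ext_iff] at this; exact this.1⟩
    · intro a ha b hb hab
      rw [Finset.mem_coe, Finset.mem_filter] at ha hb
      have h1 := ha.2; have h2 := hb.2
      simp only [Prod.ext_iff] at h1 h2 hab ⊢
      constructor
      · omega
      constructor
      · omega
      · exact hab.2
  have hg23le : ∀ p ∈ π12, g p ≤ g23 p.2 := by
    intro p _
    refine Finset.card_le_card_of_injOn (fun t => (t.2.1, t.2.2)) ?_ ?_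
    · intro t ht
      rw [Finset.mem_coe, Finset.mem_filter] at ht ⊢
      exact ⟨Finset.mem_image_of_mem _ ht.1, by
        have := ht.2; simp only [Prod.ext_iff] at this; exact this.2⟩
    · intro a ha b hb hab
      rw [Finset.mem_coe, Finset.mem_filter] at ha hb
      have h1 := ha.2; have h2 := hb.2
      simp only [Prod.ext_iff] at h1 h2 hab ⊢
      constructor
      · omega
      constructor
      · omega
      · exact hab.2
  have hsq : ∑ p ∈ π12, g p ^ 2 ≤ ∑ p ∈ π12, g13 p.1 * g23 p.2 := by
    refine Finset.sum_le_sum ?_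
    intro p hp
    rw [sq]
    exact Nat.mul_le_mul (hg13le p hp) (hg23le p hp)
  have hsub : π12 ⊆ A1 ×ˢ A2 := by
    intro p hp
    rw [hπ12, Finset.mem_image] at hp
    obtain ⟨t, ht, rfl⟩ := hp
    rw [Finset.mem_product]
    exact ⟨Finset.mem_image_of_mem _ ht, Finset.mem_image_of_mem _ ht⟩
  have hsum2 : ∑ p ∈ π12, g13 p.1 * g23 p.2 ≤ ∑ p ∈ A1 ×ˢ A2, g13 p.1 * g23 p.2 :=
    Finset.sum_le_sum_of_subset hsub
  have hprod : ∑ p ∈ A1 ×ˢ A2, g13 p.1 * g23 p.2 = (∑ a ∈ A1, g13 a) * ∑ b ∈ A2, g23 b := by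
    rw [Finset.sum_product, Finset.sum_mul_sum]
  have h13 : ∑ a ∈ A1, g13 a = π13.card := by
    symm
    refine Finset.card_eq_sum_card_fiberwise ?_
    intro q hq
    rw [hπ13, Finset.mem_coe, Finset.mem_image] at hq
    obtain ⟨t, ht, rfl⟩ := hq
    exact Finset.mem_image_of_mem _ ht
  have h23 : ∑ b ∈ A2, g23 b = π23.card := by
    symm
    refine Finset.card_eq_sum_card_fiberwise ?_
    intro q hq
    rw [hπ23, Finset.mem_coe, Finset.mem_image] at hq
    obtain ⟨t, ht, rfl⟩ := hq
    exact Finset.mem_image_of_mem _ ht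
  calc F.card ^ 2 = (∑ p ∈ π12, g p) ^ 2 := by rw [h0]
    _ ≤ π12.card * ∑ p ∈ π12, g p ^ 2 := hCS
    _ ≤ π12.card * (π13.card * π23.card) := by
        refine Nat.mul_le_mul_left _ ?_
        calc ∑ p ∈ π12, g p ^ 2 ≤ ∑ p ∈ π12, g13 p.1 * g23 p.2 := hsq
          _ ≤ ∑ p ∈ A1 ×ˢ A2, g13 p.1 * g23 p.2 := hsum2
          _ = (∑ a ∈ A1, g13 a) * ∑ b ∈ A2, g23 b := hprod
          _ = π13.card * π23.card := by rw [h13, h23]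
    _ = π12.card * (π23.card * π13.card) := by ring

set_option maxHeartbeats 1000000

/-- Data-access lower bound, case 1 (`1 ≤ P ≤ m/n`): if a processor is
assigned a set `F` of at least `n₁n₂n₃/P` lattice points of the matrix
multiplication iteration space, then the total size of the three projections
of `F` is at least `nk + mk/P + mn/P`, where `m ≥ n ≥ k` are the sorted
dimensions. -/
theorem stmt_7 (n1 n2 n3 : ℕ) (hn1 : 0 < n1) (hn2 : 0 < n2) (hn3 : 0 < n3)
    (m n k : ℕ)
    (hm : m = max n1 (max n2 n3)) (hk : k = min n1 (min n2 n3))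
    (hn : n = n1 + n2 + n3 - m - k)
    (P : ℝ) (hP1 : 1 ≤ P) (hP2 : P ≤ (m : ℝ) / n)
    (F : Finset (ℕ × ℕ × ℕ))
    (hF : ∀ t ∈ F, (1 ≤ t.1 ∧ t.1 ≤ n1) ∧ (1 ≤ t.2.1 ∧ t.2.1 ≤ n2) ∧
      (1 ≤ t.2.2 ∧ t.2.2 ≤ n3))
    (hcard : (n1 * n2 * n3 : ℝ) / P ≤ F.card) :
    (n * k : ℝ) + m * k / P + m * n / P ≤
      ((F.image fun t => (t.1, t.2.1)).card : ℝ) +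
        (F.image fun t => (t.2.1, t.2.2)).card +
        (F.image fun t => (t.1, t.2.2)).card := by
  have hP0 : (0:ℝ) < P := lt_of_lt_of_le one_pos hP1
  set A12 : ℝ := ((F.image fun t => (t.1, t.2.1)).card : ℝ) with hA12
  set A23 : ℝ := ((F.image fun t => (t.2.1, t.2.2)).card : ℝ) with hA23
  set A13 : ℝ := ((F.image fun t => (t.1, t.2.2)).card : ℝ) with hA13
  have hLWR : (F.card : ℝ)^2 ≤ A12 * (A23 * A13) := by
    rw [hA12, hA23, hA13]
    exact_mod_cast loomis_whitney F
  have hf12 : (F.card : ℝ) ≤ A12 * n3 := by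
    rw [hA12]; exact_mod_cast fiber_bound3 F n3 (fun t ht => (hF t ht).2.2)
  have hf23 : (F.card : ℝ) ≤ A23 * n1 := by
    rw [hA23]; exact_mod_cast fiber_bound1 F n1 (fun t ht => (hF t ht).1)
  have hf13 : (F.card : ℝ) ≤ A13 * n2 := by
    rw [hA13]; exact_mod_cast fiber_bound2 F n2 (fun t ht => (hF t ht).2.1)
  have c1 : (0:ℝ) < n1 := by exact_mod_cast hn1
  have c2 : (0:ℝ) < n2 := by exact_mod_cast hn2
  have c3 : (0:ℝ) < n3 := by exact_mod_cast hn3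
  rcases le_total n1 n2 with h12 | h12 <;> rcases le_total n2 n3 with h23 | h23 <;>
    rcases le_total n1 n3 with h13 | h13
  -- n1 ≤ n2 ≤ n3, so m = n3, n = n2, k = n1
  · obtain ⟨e1, e2, e3⟩ : m = n3 ∧ n = n2 ∧ k = n1 := by omega
    rw [e1, e2] at hP2
    rw [e1, e2, e3]
    have hkey := key (n3:ℝ) n2 n1 P A12 A13 A23 F.card c3 c2 c1
      (by exact_mod_cast h12) hP0 hP2 hf13 hf23
      (by nlinarith [hLWR])
      (by rw [show ((n3:ℝ) * n2 * n1) = n1 * n2 * n3 from by ring]; exact hcard)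
    linarith
  · -- n1 ≤ n2, n2 ≤ n3, n3 ≤ n1 : all equal-ish; omega gives m=n3,n=n2,k=n1 still
    obtain ⟨e1, e2, e3⟩ : m = n3 ∧ n = n2 ∧ k = n1 := by omega
    rw [e1, e2] at hP2
    rw [e1, e2, e3]
    have hkey := key (n3:ℝ) n2 n1 P A12 A13 A23 F.card c3 c2 c1
      (by exact_mod_cast h12) hP0 hP2 hf13 hf23
      (by nlinarith [hLWR])
      (by rw [show ((n3:ℝ) * n2 * n1) = n1 * n2 * n3 from by ring]; exact hcard)
    linarith
  -- n1 ≤ n2, n3 ≤ n2, n1 ≤ n3 : m = n2, n = n3, k = n1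
  · obtain ⟨e1, e2, e3⟩ : m = n2 ∧ n = n3 ∧ k = n1 := by omega
    rw [e1, e2] at hP2
    rw [e1, e2, e3]
    have hkey := key (n2:ℝ) n3 n1 P A13 A12 A23 F.card c2 c3 c1
      (by exact_mod_cast h13) hP0 hP2 hf12 hf23
      (by nlinarith [hLWR])
      (by rw [show ((n2:ℝ) * n3 * n1) = n1 * n2 * n3 from by ring]; exact hcard)
    linarith
  -- n1 ≤ n2, n3 ≤ n2, n3 ≤ n1 : m = n2, n = n1, k = n3
  · obtain ⟨e1, e2, e3⟩ : m = n2 ∧ n = n1 ∧ k = n3 := by omega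
    rw [e1, e2] at hP2
    rw [e1, e2, e3]
    have hkey := key (n2:ℝ) n1 n3 P A13 A23 A12 F.card c2 c1 c3
      (by exact_mod_cast h13) hP0 hP2 hf23 hf12
      (by nlinarith [hLWR])
      (by rw [show ((n2:ℝ) * n1 * n3) = n1 * n2 * n3 from by ring]; exact hcard)
    linarith
  -- n2 ≤ n1, n2 ≤ n3, n1 ≤ n3 : m = n3, n = n1, k = n2
  · obtain ⟨e1, e2, e3⟩ : m = n3 ∧ n = n1 ∧ k = n2 := by omega
    rw [e1, e2] at hP2
    rw [e1, e2, e3]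
    have hkey := key (n3:ℝ) n1 n2 P A12 A23 A13 F.card c3 c1 c2
      (by exact_mod_cast h12) hP0 hP2 hf23 hf13
      (by nlinarith [hLWR])
      (by rw [show ((n3:ℝ) * n1 * n2) = n1 * n2 * n3 from by ring]; exact hcard)
    linarith
  -- n2 ≤ n1, n2 ≤ n3, n3 ≤ n1 : m = n1, n = n3, k = n2
  · obtain ⟨e1, e2, e3⟩ : m = n1 ∧ n = n3 ∧ k = n2 := by omega
    rw [e1, e2] at hP2
    rw [e1, e2, e3]
    have hkey := key (n1:ℝ) n3 n2 P A23 A12 A13 F.card c1 c3 c2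
      (by exact_mod_cast h23) hP0 hP2 hf12 hf13
      (by nlinarith [hLWR])
      (by rw [show ((n1:ℝ) * n3 * n2) = n1 * n2 * n3 from by ring]; exact hcard)
    linarith
  · -- n2 ≤ n1, n3 ≤ n2, n1 ≤ n3: all equal; m = n1, n = n2, k = n3
    obtain ⟨e1, e2, e3⟩ : m = n1 ∧ n = n2 ∧ k = n3 := by omega
    rw [e1, e2] at hP2
    rw [e1, e2, e3]
    have hkey := key (n1:ℝ) n2 n3 P A23 A13 A12 F.card c1 c2 c3
      (by exact_mod_cast h23) hP0 hP2 hf13 hf12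
      (by nlinarith [hLWR]) hcard
    linarith
  -- n2 ≤ n1, n3 ≤ n2 (so n3 ≤ n1) : m = n1, n = n2, k = n3
  · obtain ⟨e1, e2, e3⟩ : m = n1 ∧ n = n2 ∧ k = n3 := by omega
    rw [e1, e2] at hP2
    rw [e1, e2, e3]
    have hkey := key (n1:ℝ) n2 n3 P A23 A13 A12 F.card c1 c2 c3
      (by exact_mod_cast h23) hP0 hP2 hf13 hf12
      (by nlinarith [hLWR]) hcard
    linarith
end

section
/- Let n1, n2, n3 be positive integers, set m = max{n1, n2, n3}, n = median{n1, n2, n3}, k = min{n1, n2, n3}, and let P be a real number with m/n ≤ P ≤ mn/k². If F is a finite set of triples (i1, i2, i3) with 1 ≤ i1 ≤ n1, 1 ≤ i2 ≤ n2, 1 ≤ i3 ≤ n3 and |F| ≥ n1·n2·n3 / P, then |φ_A(F)| + |φ_B(F)| + |φ_C(F)| ≥ 2·(mnk²/P)^{1/2} + mn/P. -/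
open Finset

/-- Discrete Loomis–Whitney inequality for triples. -/
lemma lw3 (F : Finset (ℕ × ℕ × ℕ)) :
    (F.card : ℝ) ^ 2 ≤ ((F.image fun t => (t.1, t.2.1)).card : ℝ) *
      (((F.image fun t => (t.2.1, t.2.2)).card : ℝ) *
        ((F.image fun t => (t.1, t.2.2)).card : ℝ)) := by
  classical
  set A := F.image fun t => (t.1, t.2.1) with hA
  set B := F.image fun t => (t.2.1, t.2.2) with hB
  set C := F.image fun t => (t.1, t.2.2) with hC
  set fib : ℕ × ℕ → Finset (ℕ × ℕ × ℕ) :=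
    fun p => F.filter fun t => (t.1, t.2.1) = p with hfib
  have hsum : F.card = ∑ p ∈ A, (fib p).card :=
    card_eq_sum_card_fiberwise (fun t ht => mem_image_of_mem _ ht)
  -- sum of squares of fibers is at most |B| * |C|
  have hD : ∑ p ∈ A, (fib p).card * (fib p).card ≤ B.card * C.card := by
    have hdisj : ∀ p ∈ A, ∀ q ∈ A, p ≠ q →
        Disjoint ((fib p) ×ˢ (fib p)) ((fib q) ×ˢ (fib q)) := by
      intro p _ q _ hpq
      rw [Finset.disjoint_left]
      rintro x hx hx'
      simp only [hfib, mem_product, mem_filter] at hx hx'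
      exact hpq (hx.1.2 ▸ hx'.1.2)
    have hcardD : (A.biUnion fun p => (fib p) ×ˢ (fib p)).card
        = ∑ p ∈ A, (fib p).card * (fib p).card := by
      rw [card_biUnion hdisj]
      exact Finset.sum_congr rfl fun p _ => card_product _ _
    rw [← hcardD, ← card_product]
    apply card_le_card_of_injOn
      (fun q => ((q.1.2.1, q.1.2.2), (q.2.1, q.2.2.2)))
    · intro q hq
      simp only [mem_coe, mem_biUnion, mem_product, hfib, mem_filter] at hq
      obtain ⟨p, _, ⟨h1, _⟩, ⟨h2, _⟩⟩ := hq
      exact mem_product.2 ⟨mem_image_of_mem _ h1, mem_image_of_mem _ h2⟩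
    · intro q hq q' hq' heq
      simp only [coe_biUnion, Set.mem_iUnion, mem_coe, mem_product, hfib,
        mem_filter] at hq hq'
      obtain ⟨p, _, ⟨_, e1⟩, ⟨_, e2⟩⟩ := hq
      obtain ⟨p', _, ⟨_, e1'⟩, ⟨_, e2'⟩⟩ := hq'
      have e3 := e1.trans e2.symm
      have e3' := e1'.trans e2'.symm
      simp only [Prod.ext_iff] at heq e3 e3' ⊢
      omega
  -- Cauchy–Schwarz
  have hcs : ((F.card : ℝ)) ^ 2 ≤ (A.card : ℝ) * ∑ p ∈ A, ((fib p).card : ℝ) ^ 2 := by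
    rw [hsum]
    push_cast
    exact sq_sum_le_card_mul_sum_sq
  refine hcs.trans ?_
  apply mul_le_mul_of_nonneg_left ?_ (by positivity)
  calc ∑ p ∈ A, ((fib p).card : ℝ) ^ 2
      = ((∑ p ∈ A, (fib p).card * (fib p).card : ℕ) : ℝ) := by simp [sq]
    _ ≤ ((B.card * C.card : ℕ) : ℝ) := by exact_mod_cast Nat.cast_le.2 hD
    _ = _ := by push_cast; ring

lemma fiber_bound (F : Finset (ℕ × ℕ × ℕ)) (g : ℕ × ℕ × ℕ → ℕ × ℕ)
    (h : ℕ × ℕ × ℕ → ℕ) (N : ℕ)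
    (hinj : ∀ t s : ℕ × ℕ × ℕ, g t = g s → h t = h s → t = s)
    (hr : ∀ t ∈ F, 1 ≤ h t ∧ h t ≤ N) :
    F.card ≤ N * (F.image g).card := by
  classical
  apply Finset.card_le_mul_card_image
  intro a _
  calc (F.filter fun x => g x = a).card ≤ (Finset.Icc 1 N).card := by
        apply Finset.card_le_card_of_injOn h
        · intro t ht
          rw [Finset.mem_coe, Finset.mem_filter] at ht
          exact Finset.mem_Icc.2 (hr t ht.1)
        · intro t ht s hs hts
          simp only [Finset.coe_filter, Set.mem_setOf_eq] at ht hs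
          exact hinj t s (ht.2.trans hs.2.symm) hts
    _ = N := by simp [Nat.card_Icc]

lemma key_mono (S x y z x0 : ℝ) (hx0 : 0 < x0) (hS : 0 ≤ S)
    (hy : 0 ≤ y) (hz : 0 ≤ z) (hx : x0 ≤ x)
    (hlw : S ^ 2 ≤ x * (y * z)) (hc : S ≤ x0 * Real.sqrt x0) :
    x0 + 2 * (S / Real.sqrt x0) ≤ x + (y + z) := by
  set u0 := Real.sqrt x0 with hu0def
  set u := Real.sqrt x with hudef
  have hu0 : 0 < u0 := Real.sqrt_pos.2 hx0
  have hxpos : 0 < x := lt_of_lt_of_le hx0 hx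
  have hu : 0 < u := Real.sqrt_pos.2 hxpos
  have huu : u0 ≤ u := Real.sqrt_le_sqrt hx
  have hx0u : u0 ^ 2 = x0 := Real.sq_sqrt hx0.le
  have hxu : u ^ 2 = x := Real.sq_sqrt hxpos.le
  -- y + z ≥ 2 S / u
  have hyz : S ^ 2 / x ≤ y * z := (div_le_iff₀ hxpos).2 (by nlinarith)
  have h1 : 2 * (S / u) ≤ y + z := by
    have hs : Real.sqrt (S ^ 2 / x) ≤ Real.sqrt (y * z) := Real.sqrt_le_sqrt hyz
    have e : Real.sqrt (S ^ 2 / x) = S / u := by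
      rw [Real.sqrt_div (by positivity), Real.sqrt_sq hS]
    have h2 : Real.sqrt (y * z) * 2 ≤ y + z := by
      nlinarith [Real.sq_sqrt hy, Real.sq_sqrt hz, Real.sqrt_mul hy z,
        sq_nonneg (Real.sqrt y - Real.sqrt z), Real.sqrt_nonneg y, Real.sqrt_nonneg z]
    rw [e] at hs
    linarith
  -- monotonicity step
  have hS3 : S ≤ u0 ^ 3 := by nlinarith
  have hm : (u0 ^ 2 + 2 * (S / u0)) * (u * u0) ≤ (u ^ 2 + 2 * (S / u)) * (u * u0) := by
    have e1 : (u0 ^ 2 + 2 * (S / u0)) * (u * u0) = u0 ^ 2 * u * u0 + 2 * S * u := by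
      field_simp
    have e2 : (u ^ 2 + 2 * (S / u)) * (u * u0) = u ^ 2 * u * u0 + 2 * S * u0 := by
      field_simp
    rw [e1, e2]
    have hd : 0 ≤ u - u0 := sub_nonneg.2 huu
    nlinarith [mul_nonneg hd (sub_nonneg.2 hS3), mul_nonneg (mul_nonneg hd hd) hu0.le,
      mul_nonneg (mul_nonneg hd hd) hu.le, mul_nonneg (mul_nonneg (mul_nonneg hd hd) hu0.le) hu0.le]
  have hmm : u0 ^ 2 + 2 * (S / u0) ≤ u ^ 2 + 2 * (S / u) :=
    le_of_mul_le_mul_right hm (by positivity)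
  rw [hx0u, hxu] at hmm
  linarith

lemma core (X Y Z m n k P Fc : ℝ) (hm : 0 < m) (hn : 0 < n) (hk : 0 < k)
    (hP : 0 < P) (hP2 : P ≤ m * n / k ^ 2) (hFc : m * n * k / P ≤ Fc)
    (hY : 0 ≤ Y) (hZ : 0 ≤ Z)
    (hfib : Fc ≤ k * X) (hlw : Fc ^ 2 ≤ X * (Y * Z)) :
    2 * Real.sqrt (m * n * k ^ 2 / P) + m * n / P ≤ X + Y + Z := by
  set x0 := m * n / P with hx0def
  set S := m * n * k / P with hSdef
  have hx0 : 0 < x0 := by positivity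
  have hS : 0 < S := by positivity
  have hk2 : k ^ 2 ≤ x0 := by
    rw [hx0def, le_div_iff₀ hP]
    calc k ^ 2 * P ≤ k ^ 2 * (m * n / k ^ 2) := by
          apply mul_le_mul_of_nonneg_left hP2 (by positivity)
      _ = m * n := by field_simp
  have hksqrt : k ≤ Real.sqrt x0 := by
    rw [show k = Real.sqrt (k ^ 2) from (Real.sqrt_sq hk.le).symm]
    exact Real.sqrt_le_sqrt hk2
  have hx : x0 ≤ X := by
    have h0 : S = x0 * k := by rw [hSdef, hx0def]; ring
    have : S ≤ k * X := le_trans hFc hfib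
    rw [h0] at this
    nlinarith
  have hc : S ≤ x0 * Real.sqrt x0 := by
    have h0 : S = x0 * k := by rw [hSdef, hx0def]; ring
    rw [h0]
    exact mul_le_mul_of_nonneg_left hksqrt hx0.le
  have hlw' : S ^ 2 ≤ X * (Y * Z) := by
    have : S ≤ Fc := le_trans hFc (le_refl _)
    nlinarith
  have hkey := key_mono S X Y Z x0 hx0 hS.le hY hZ hx hlw' hc
  have heq : Real.sqrt (m * n * k ^ 2 / P) = S / Real.sqrt x0 := by
    have e1 : m * n * k ^ 2 / P = x0 * k ^ 2 := by rw [hx0def]; ring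
    have h0 : S = x0 * k := by rw [hSdef, hx0def]; ring
    rw [e1, Real.sqrt_mul hx0.le, Real.sqrt_sq hk.le,
      eq_div_iff (Real.sqrt_pos.2 hx0).ne', h0]
    linear_combination k * Real.mul_self_sqrt hx0.le
  rw [heq]
  linarith

/-- Data-access lower bound, case 2 (`m/n ≤ P ≤ mn/k²`): if a processor is
assigned a set `F` of at least `n₁n₂n₃/P` lattice points of the matrix
multiplication iteration space, then the total size of the three projections
of `F` is at least `2(mnk²/P)^{1/2} + mn/P`, where `m ≥ n ≥ k` are the sorted
dimensions. -/
theorem stmt_8 (n1 n2 n3 : ℕ) (hn1 : 0 < n1) (hn2 : 0 < n2) (hn3 : 0 < n3)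
    (m n k : ℕ)
    (hm : m = max n1 (max n2 n3)) (hk : k = min n1 (min n2 n3))
    (hn : n = n1 + n2 + n3 - m - k)
    (P : ℝ) (hP1 : (m : ℝ) / n ≤ P) (hP2 : P ≤ (m : ℝ) * n / (k : ℝ) ^ 2)
    (F : Finset (ℕ × ℕ × ℕ))
    (hF : ∀ t ∈ F, (1 ≤ t.1 ∧ t.1 ≤ n1) ∧ (1 ≤ t.2.1 ∧ t.2.1 ≤ n2) ∧
      (1 ≤ t.2.2 ∧ t.2.2 ≤ n3))
    (hcard : (n1 * n2 * n3 : ℝ) / P ≤ F.card) :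
    2 * Real.sqrt ((m : ℝ) * n * (k : ℝ) ^ 2 / P) + (m : ℝ) * n / P ≤
      ((F.image fun t => (t.1, t.2.1)).card : ℝ) +
        (F.image fun t => (t.2.1, t.2.2)).card +
        (F.image fun t => (t.1, t.2.2)).card := by
  classical
  have hA : F.card ≤ n3 * (F.image fun t => (t.1, t.2.1)).card :=
    fiber_bound F _ (fun t => t.2.2) n3
      (by intro t s h1 h2; simp only [Prod.ext_iff] at *; omega)
      (fun t ht => (hF t ht).2.2)
  have hB : F.card ≤ n1 * (F.image fun t => (t.2.1, t.2.2)).card :=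
    fiber_bound F _ (fun t => t.1) n1
      (by intro t s h1 h2; simp only [Prod.ext_iff] at *; omega)
      (fun t ht => (hF t ht).1)
  have hC : F.card ≤ n2 * (F.image fun t => (t.1, t.2.2)).card :=
    fiber_bound F _ (fun t => t.2.1) n2
      (by intro t s h1 h2; simp only [Prod.ext_iff] at *; omega)
      (fun t ht => (hF t ht).2.1)
  have hmpos : 0 < m := by omega
  have hnpos : 0 < n := by omega
  have hPpos : 0 < P :=
    lt_of_lt_of_le (div_pos (Nat.cast_pos.2 hmpos) (Nat.cast_pos.2 hnpos)) hP1
  rcases le_total n1 n2 with h12 | h12 <;> rcases le_total n2 n3 with h23 | h23 <;>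
    rcases le_total n1 n3 with h13 | h13
  · obtain ⟨e1, e2, e3⟩ : m = n3 ∧ n = n2 ∧ k = n1 := by omega
    have c1 : (m : ℝ) = n3 := by rw [e1]
    have c2 : (n : ℝ) = n2 := by rw [e2]
    have c3 : (k : ℝ) = n1 := by rw [e3]
    rw [c1, c2, c3] at hP2 ⊢
    have h := core ((F.image (fun t => (t.2.1, t.2.2))).card : ℝ) ((F.image (fun t => (t.1, t.2.1))).card : ℝ) ((F.image (fun t => (t.1, t.2.2))).card : ℝ)
      (↑n3) (↑n2) (↑n1) P (↑F.card)
      (Nat.cast_pos.2 hn3) (Nat.cast_pos.2 hn2) (Nat.cast_pos.2 hn1) hPpos hP2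
      (le_trans (le_of_eq (by push_cast; ring)) hcard)
      (Nat.cast_nonneg _) (Nat.cast_nonneg _)
      (by exact_mod_cast hB) ((lw3 F).trans_eq (by ring))
    linarith
  · obtain ⟨e1, e2, e3⟩ : m = n3 ∧ n = n2 ∧ k = n1 := by omega
    have c1 : (m : ℝ) = n3 := by rw [e1]
    have c2 : (n : ℝ) = n2 := by rw [e2]
    have c3 : (k : ℝ) = n1 := by rw [e3]
    rw [c1, c2, c3] at hP2 ⊢
    have h := core ((F.image (fun t => (t.2.1, t.2.2))).card : ℝ) ((F.image (fun t => (t.1, t.2.1))).card : ℝ) ((F.image (fun t => (t.1, t.2.2))).card : ℝ)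
      (↑n3) (↑n2) (↑n1) P (↑F.card)
      (Nat.cast_pos.2 hn3) (Nat.cast_pos.2 hn2) (Nat.cast_pos.2 hn1) hPpos hP2
      (le_trans (le_of_eq (by push_cast; ring)) hcard)
      (Nat.cast_nonneg _) (Nat.cast_nonneg _)
      (by exact_mod_cast hB) ((lw3 F).trans_eq (by ring))
    linarith
  · obtain ⟨e1, e2, e3⟩ : m = n2 ∧ n = n3 ∧ k = n1 := by omega
    have c1 : (m : ℝ) = n2 := by rw [e1]
    have c2 : (n : ℝ) = n3 := by rw [e2]
    have c3 : (k : ℝ) = n1 := by rw [e3]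
    rw [c1, c2, c3] at hP2 ⊢
    have h := core ((F.image (fun t => (t.2.1, t.2.2))).card : ℝ) ((F.image (fun t => (t.1, t.2.1))).card : ℝ) ((F.image (fun t => (t.1, t.2.2))).card : ℝ)
      (↑n2) (↑n3) (↑n1) P (↑F.card)
      (Nat.cast_pos.2 hn2) (Nat.cast_pos.2 hn3) (Nat.cast_pos.2 hn1) hPpos hP2
      (le_trans (le_of_eq (by push_cast; ring)) hcard)
      (Nat.cast_nonneg _) (Nat.cast_nonneg _)
      (by exact_mod_cast hB) ((lw3 F).trans_eq (by ring))
    linarith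
  · obtain ⟨e1, e2, e3⟩ : m = n2 ∧ n = n1 ∧ k = n3 := by omega
    have c1 : (m : ℝ) = n2 := by rw [e1]
    have c2 : (n : ℝ) = n1 := by rw [e2]
    have c3 : (k : ℝ) = n3 := by rw [e3]
    rw [c1, c2, c3] at hP2 ⊢
    have h := core ((F.image (fun t => (t.1, t.2.1))).card : ℝ) ((F.image (fun t => (t.2.1, t.2.2))).card : ℝ) ((F.image (fun t => (t.1, t.2.2))).card : ℝ)
      (↑n2) (↑n1) (↑n3) P (↑F.card)
      (Nat.cast_pos.2 hn2) (Nat.cast_pos.2 hn1) (Nat.cast_pos.2 hn3) hPpos hP2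
      (le_trans (le_of_eq (by push_cast; ring)) hcard)
      (Nat.cast_nonneg _) (Nat.cast_nonneg _)
      (by exact_mod_cast hA) ((lw3 F).trans_eq (by ring))
    linarith
  · obtain ⟨e1, e2, e3⟩ : m = n3 ∧ n = n1 ∧ k = n2 := by omega
    have c1 : (m : ℝ) = n3 := by rw [e1]
    have c2 : (n : ℝ) = n1 := by rw [e2]
    have c3 : (k : ℝ) = n2 := by rw [e3]
    rw [c1, c2, c3] at hP2 ⊢
    have h := core ((F.image (fun t => (t.1, t.2.2))).card : ℝ) ((F.image (fun t => (t.1, t.2.1))).card : ℝ) ((F.image (fun t => (t.2.1, t.2.2))).card : ℝ)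
      (↑n3) (↑n1) (↑n2) P (↑F.card)
      (Nat.cast_pos.2 hn3) (Nat.cast_pos.2 hn1) (Nat.cast_pos.2 hn2) hPpos hP2
      (le_trans (le_of_eq (by push_cast; ring)) hcard)
      (Nat.cast_nonneg _) (Nat.cast_nonneg _)
      (by exact_mod_cast hC) ((lw3 F).trans_eq (by ring))
    linarith
  · obtain ⟨e1, e2, e3⟩ : m = n1 ∧ n = n3 ∧ k = n2 := by omega
    have c1 : (m : ℝ) = n1 := by rw [e1]
    have c2 : (n : ℝ) = n3 := by rw [e2]
    have c3 : (k : ℝ) = n2 := by rw [e3]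
    rw [c1, c2, c3] at hP2 ⊢
    have h := core ((F.image (fun t => (t.1, t.2.2))).card : ℝ) ((F.image (fun t => (t.1, t.2.1))).card : ℝ) ((F.image (fun t => (t.2.1, t.2.2))).card : ℝ)
      (↑n1) (↑n3) (↑n2) P (↑F.card)
      (Nat.cast_pos.2 hn1) (Nat.cast_pos.2 hn3) (Nat.cast_pos.2 hn2) hPpos hP2
      (le_trans (le_of_eq (by push_cast; ring)) hcard)
      (Nat.cast_nonneg _) (Nat.cast_nonneg _)
      (by exact_mod_cast hC) ((lw3 F).trans_eq (by ring))
    linarith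
  · obtain ⟨e1, e2, e3⟩ : m = n1 ∧ n = n2 ∧ k = n3 := by omega
    have c1 : (m : ℝ) = n1 := by rw [e1]
    have c2 : (n : ℝ) = n2 := by rw [e2]
    have c3 : (k : ℝ) = n3 := by rw [e3]
    rw [c1, c2, c3] at hP2 ⊢
    have h := core ((F.image (fun t => (t.1, t.2.1))).card : ℝ) ((F.image (fun t => (t.2.1, t.2.2))).card : ℝ) ((F.image (fun t => (t.1, t.2.2))).card : ℝ)
      (↑n1) (↑n2) (↑n3) P (↑F.card)
      (Nat.cast_pos.2 hn1) (Nat.cast_pos.2 hn2) (Nat.cast_pos.2 hn3) hPpos hP2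
      (le_trans (le_of_eq (by push_cast; ring)) hcard)
      (Nat.cast_nonneg _) (Nat.cast_nonneg _)
      (by exact_mod_cast hA) ((lw3 F).trans_eq (by ring))
    linarith
  · obtain ⟨e1, e2, e3⟩ : m = n1 ∧ n = n2 ∧ k = n3 := by omega
    have c1 : (m : ℝ) = n1 := by rw [e1]
    have c2 : (n : ℝ) = n2 := by rw [e2]
    have c3 : (k : ℝ) = n3 := by rw [e3]
    rw [c1, c2, c3] at hP2 ⊢
    have h := core ((F.image (fun t => (t.1, t.2.1))).card : ℝ) ((F.image (fun t => (t.2.1, t.2.2))).card : ℝ) ((F.image (fun t => (t.1, t.2.2))).card : ℝ)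
      (↑n1) (↑n2) (↑n3) P (↑F.card)
      (Nat.cast_pos.2 hn1) (Nat.cast_pos.2 hn2) (Nat.cast_pos.2 hn3) hPpos hP2
      (le_trans (le_of_eq (by push_cast; ring)) hcard)
      (Nat.cast_nonneg _) (Nat.cast_nonneg _)
      (by exact_mod_cast hA) ((lw3 F).trans_eq (by ring))
    linarith
end

section
/- Let m, n, k, P be strictly positive real numbers with m ≥ n ≥ k and m/n ≤ P ≤ mn/k². Define p = (P·m/n)^{1/2} and q = (P·n/m)^{1/2}. Then p ≥ 1, q ≥ 1, p·q = P, and mn/(p·q) + mk/p + nk/q = 2·(mnk²/P)^{1/2} + mn/P. Consequently, the communication cost mn/(p·q) + mk/p + nk/q − (mn + mk + nk)/P of the parallel matrix multiplication algorithm on a p × q × 1 processor grid equals 2·(mnk²/P)^{1/2} − (mk + nk)/P, matching the 2D-case lower bound. -/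
/-- Optimal 2D processor grid (`m/n ≤ P ≤ mn/k²`): with `p = (Pm/n)^{1/2}` and
`q = (Pn/m)^{1/2}`, we have `p, q ≥ 1`, `pq = P`, the communicated-data
identity `mn/(pq) + mk/p + nk/q = 2(mnk²/P)^{1/2} + mn/P`, and the resulting
communication cost matches the 2D-case lower bound
`2(mnk²/P)^{1/2} − (mk + nk)/P`. -/
theorem stmt_11 (m n k P : ℝ) (hm : 0 < m) (hn : 0 < n) (hk : 0 < k)
    (hP : 0 < P) (hnk : k ≤ n) (hmn : n ≤ m)
    (hP1 : m / n ≤ P) (hP2 : P ≤ m * n / k ^ 2) :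
    1 ≤ Real.sqrt (P * m / n) ∧
    1 ≤ Real.sqrt (P * n / m) ∧
    Real.sqrt (P * m / n) * Real.sqrt (P * n / m) = P ∧
    m * n / (Real.sqrt (P * m / n) * Real.sqrt (P * n / m)) +
        m * k / Real.sqrt (P * m / n) + n * k / Real.sqrt (P * n / m) =
      2 * Real.sqrt (m * n * k ^ 2 / P) + m * n / P ∧
    m * n / (Real.sqrt (P * m / n) * Real.sqrt (P * n / m)) +
        m * k / Real.sqrt (P * m / n) + n * k / Real.sqrt (P * n / m) -
        (m * n + m * k + n * k) / P =
      2 * Real.sqrt (m * n * k ^ 2 / P) - (m * k + n * k) / P := by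
  set s := Real.sqrt (P * m / n) with hs
  set t := Real.sqrt (P * n / m) with ht
  set w := Real.sqrt (m * n * k ^ 2 / P) with hw
  have hsp : 0 < s := Real.sqrt_pos.mpr (by positivity)
  have htp : 0 < t := Real.sqrt_pos.mpr (by positivity)
  have hs1 : 1 ≤ s := by
    rw [hs, show (1 : ℝ) = Real.sqrt 1 by simp]
    apply Real.sqrt_le_sqrt
    rw [le_div_iff₀ hn, one_mul, div_le_iff₀ hn] at *
    nlinarith [mul_le_mul_of_nonneg_left hmn hP.le]
  have ht1 : 1 ≤ t := by
    rw [ht, show (1 : ℝ) = Real.sqrt 1 by simp]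
    apply Real.sqrt_le_sqrt
    rw [le_div_iff₀ hm, one_mul]
    rw [div_le_iff₀ hn] at hP1
    linarith
  have hst : s * t = P := by
    rw [hs, ht, ← Real.sqrt_mul (by positivity),
      show P * m / n * (P * n / m) = P ^ 2 by field_simp,
      Real.sqrt_sq hP.le]
  have hsw : s * w = m * k := by
    rw [hs, hw, ← Real.sqrt_mul (by positivity),
      show P * m / n * (m * n * k ^ 2 / P) = (m * k) ^ 2 by field_simp,
      Real.sqrt_sq (by positivity)]
  have htw : t * w = n * k := by
    rw [ht, hw, ← Real.sqrt_mul (by positivity),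
      show P * n / m * (m * n * k ^ 2 / P) = (n * k) ^ 2 by field_simp,
      Real.sqrt_sq (by positivity)]
  have h1 : m * k / s = w := by
    rw [← hsw]; field_simp
  have h2 : n * k / t = w := by
    rw [← htw]; field_simp
  have hmain : m * n / (s * t) + m * k / s + n * k / t = 2 * w + m * n / P := by
    rw [hst, h1, h2]; ring
  exact ⟨hs1, ht1, hst, hmain, by rw [hmain]; ring⟩
end

section
/- Let m, n, k, P be strictly positive real numbers with m ≥ n ≥ k and P ≥ mn/k². Define p = (P/(mnk))^{1/3}·m, q = (P/(mnk))^{1/3}·n, and r = (P/(mnk))^{1/3}·k. Then p ≥ q ≥ r ≥ 1, p·q·r = P, and mn/(p·q) + nk/(q·r) + mk/(p·r) = 3·(mnk/P)^{2/3}. Consequently, the communication cost mn/(pq) + nk/(qr) + mk/(pr) − (mn + mk + nk)/P of the parallel matrix multiplication algorithm on this p × q × r processor grid equals 3·(mnk/P)^{2/3} − (mn + mk + nk)/P, matching the 3D-case lower bound. -/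
/-- Optimal 3D processor grid (`P ≥ mn/k²`): with
`p = (P/(mnk))^{1/3}·m`, `q = (P/(mnk))^{1/3}·n`, `r = (P/(mnk))^{1/3}·k`,
we have `p ≥ q ≥ r ≥ 1`, `pqr = P`, the communicated-data identity
`mn/(pq) + nk/(qr) + mk/(pr) = 3(mnk/P)^{2/3}`, and the resulting
communication cost matches the 3D-case lower bound
`3(mnk/P)^{2/3} − (mn + mk + nk)/P`. -/
theorem stmt_12 (m n k P : ℝ) (hm : 0 < m) (hn : 0 < n) (hk : 0 < k)
    (hP : 0 < P) (hnk : k ≤ n) (hmn : n ≤ m) (hP2 : m * n / k ^ 2 ≤ P) :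
    (P / (m * n * k)) ^ ((1 : ℝ) / 3) * n ≤ (P / (m * n * k)) ^ ((1 : ℝ) / 3) * m ∧
    (P / (m * n * k)) ^ ((1 : ℝ) / 3) * k ≤ (P / (m * n * k)) ^ ((1 : ℝ) / 3) * n ∧
    1 ≤ (P / (m * n * k)) ^ ((1 : ℝ) / 3) * k ∧
    ((P / (m * n * k)) ^ ((1 : ℝ) / 3) * m) * ((P / (m * n * k)) ^ ((1 : ℝ) / 3) * n) *
        ((P / (m * n * k)) ^ ((1 : ℝ) / 3) * k) = P ∧
    m * n / (((P / (m * n * k)) ^ ((1 : ℝ) / 3) * m) * ((P / (m * n * k)) ^ ((1 : ℝ) / 3) * n)) +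
        n * k / (((P / (m * n * k)) ^ ((1 : ℝ) / 3) * n) * ((P / (m * n * k)) ^ ((1 : ℝ) / 3) * k)) +
        m * k / (((P / (m * n * k)) ^ ((1 : ℝ) / 3) * m) * ((P / (m * n * k)) ^ ((1 : ℝ) / 3) * k)) =
      3 * (m * n * k / P) ^ ((2 : ℝ) / 3) ∧
    m * n / (((P / (m * n * k)) ^ ((1 : ℝ) / 3) * m) * ((P / (m * n * k)) ^ ((1 : ℝ) / 3) * n)) +
        n * k / (((P / (m * n * k)) ^ ((1 : ℝ) / 3) * n) * ((P / (m * n * k)) ^ ((1 : ℝ) / 3) * k)) +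
        m * k / (((P / (m * n * k)) ^ ((1 : ℝ) / 3) * m) * ((P / (m * n * k)) ^ ((1 : ℝ) / 3) * k)) -
        (m * n + m * k + n * k) / P =
      3 * (m * n * k / P) ^ ((2 : ℝ) / 3) - (m * n + m * k + n * k) / P := by
  have hmnk : 0 < m * n * k := by positivity
  set c : ℝ := (P / (m * n * k)) ^ ((1 : ℝ) / 3) with hc
  have hx : 0 < P / (m * n * k) := by positivity
  have hcpos : 0 < c := Real.rpow_pos_of_pos hx _
  have hc3 : c ^ 3 = P / (m * n * k) := by
    rw [hc, ← Real.rpow_natCast (_ ^ _) 3, ← Real.rpow_mul hx.le]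
    norm_num
  have hc2 : c ^ 2 = (P / (m * n * k)) ^ ((2 : ℝ) / 3) := by
    rw [hc, ← Real.rpow_natCast (_ ^ _) 2, ← Real.rpow_mul hx.le]
    norm_num
  have hinv : (m * n * k / P) ^ ((2 : ℝ) / 3) = 1 / c ^ 2 := by
    rw [hc2, show m * n * k / P = (P / (m * n * k))⁻¹ by field_simp,
      Real.inv_rpow hx.le, one_div]
  have h1 : 1 ≤ c * k := by
    have h3 : 1 ≤ (c * k) ^ 3 := by
      rw [mul_pow, hc3]
      rw [div_le_iff₀ (by positivity)] at hP2
      rw [← sub_nonneg]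
      have : P / (m * n * k) * k ^ 3 - 1 = (P * k ^ 2 - m * n) / (m * n * k) * k := by
        field_simp
      rw [this]
      have : 0 ≤ P * k ^ 2 - m * n := by nlinarith
      positivity
    nlinarith [sq_nonneg (c * k - 1), sq_nonneg (c * k + 1), mul_pos hcpos hk]
  have heq : m * n / ((c * m) * (c * n)) + n * k / ((c * n) * (c * k)) +
      m * k / ((c * m) * (c * k)) = 3 * (m * n * k / P) ^ ((2 : ℝ) / 3) := by
    rw [hinv]
    field_simp
    ring
  refine ⟨by nlinarith, by nlinarith, h1, ?_, heq, by rw [heq]⟩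
  have : c * m * (c * n) * (c * k) = c ^ 3 * (m * n * k) := by ring
  rw [this, hc3]; field_simp
end
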